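/- Let A and B be two d×d positive semidefinite matrices such that the null space of A is contained in the null space of B (equivalently, BB† ⪯ AA† in the positive semidefinite order). Then ‖A B A − BB†‖_F ≤ 2·‖A B A − AA†‖_F. -/

import Mathlib

open Matrix MeasureTheory ProbabilityTheory

noncomputable section

namespace ListDecCov

/-- Frobenius norm of a square real matrix. -/
def frobNorm {d : ℕ} (M : Matrix (Fin d) (Fin d) ℝ) : ℝ :=
  Real.sqrt (∑ i, ∑ j, (M i j) ^ 2)

/-- Operator (spectral) norm of a square real matrix. -/
def opNorm {d : ℕ} (M : Matrix (Fin d) (Fin d) ℝ) : ℝ :=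
  ‖Matrix.toEuclideanCLM (𝕜 := ℝ) M‖

/-- Euclidean (ℓ²) norm of a vector. -/
def vecNorm {d : ℕ} (v : Fin d → ℝ) : ℝ :=
  Real.sqrt (∑ i, (v i) ^ 2)

/-- The four Penrose equations characterizing the Moore–Penrose pseudoinverse. -/
def IsMoorePenrose {d : ℕ} (H Hd : Matrix (Fin d) (Fin d) ℝ) : Prop :=
  H * Hd * H = H ∧ Hd * H * Hd = Hd ∧ (H * Hd)ᵀ = H * Hd ∧ (Hd * H)ᵀ = Hd * H

/-- Average of `f` over a finite set. -/
def fAvg {X V : Type*} [AddCommMonoid V] [Module ℝ V] (A : Finset X) (f : X → V) : V :=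
  (A.card : ℝ)⁻¹ • ∑ x ∈ A, f x

/-- Average of `f` over a multiset. -/
def msAvg {X V : Type*} [AddCommMonoid V] [Module ℝ V] (T : Multiset X) (f : X → V) : V :=
  (T.card : ℝ)⁻¹ • (T.map f).sum

/-- Empirical covariance matrix of `f x`, `x` ranging over a finite set. -/
def fCov {X : Type*} {d : ℕ} (A : Finset X) (f : X → (Fin d → ℝ)) :
    Matrix (Fin d) (Fin d) ℝ :=
  fAvg A (fun x => Matrix.vecMulVec (f x) (f x)) - Matrix.vecMulVec (fAvg A f) (fAvg A f)

/-- Empirical covariance matrix of `f x`, `x` ranging over a multiset. -/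
def msCov {X : Type*} {d : ℕ} (T : Multiset X) (f : X → (Fin d → ℝ)) :
    Matrix (Fin d) (Fin d) ℝ :=
  msAvg T (fun x => Matrix.vecMulVec (f x) (f x)) - Matrix.vecMulVec (msAvg T f) (msAvg T f)

/-- Empirical variance of `g x`, `x` ranging over a finite set. -/
def fVar {X : Type*} (A : Finset X) (g : X → ℝ) : ℝ :=
  fAvg A fun x => (g x - fAvg A g) ^ 2

/-- Empirical variance of `g x`, `x` ranging over a multiset. -/
def msVar {X : Type*} (T : Multiset X) (g : X → ℝ) : ℝ :=
  msAvg T fun x => (g x - msAvg T g) ^ 2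

/-- The `k`-th smallest element (1-indexed) of a multiset of reals. -/
def kthSmallest (s : Multiset ℝ) (k : ℕ) : ℝ :=
  (s.sort (· ≤ ·)).getD (k - 1) 0

/-- Median (the `⌈m/2⌉`-th smallest element) of a multiset of reals of size `m`. -/
def msMedian (s : Multiset ℝ) : ℝ :=
  kthSmallest s ((Multiset.card s + 1) / 2)

/-- Conditions (L.1)–(L.2) of stability, with respect to mean `μ`, covariance `Sig`
(with psd square root `sqrtSig`) and parameter `ε`. -/
def SatisfiesL12 {d : ℕ} (μ : Fin d → ℝ) (Sig sqrtSig : Matrix (Fin d) (Fin d) ℝ) (ε : ℝ)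
    (A : Finset (Fin d → ℝ)) : Prop :=
  ∀ A' ⊆ A, (1 - ε) * (A.card : ℝ) ≤ (A'.card : ℝ) →
    (∀ v : Fin d → ℝ,
        |fAvg A' (fun x => v ⬝ᵥ (x - μ))| ≤ 0.1 * Real.sqrt (v ⬝ᵥ Sig.mulVec v)) ∧
    (∀ U : Matrix (Fin d) (Fin d) ℝ, U.IsSymm →
        |Matrix.trace ((fAvg A' (fun x => Matrix.vecMulVec (x - μ) (x - μ)) - Sig) * U)|
          ≤ 0.1 * frobNorm (sqrtSig * U * sqrtSig))

end ListDecCov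

namespace ListDecCov

attribute [local instance] Matrix.frobeniusNormedAddCommGroup

lemma frobNorm_eq {d : ℕ} (M : Matrix (Fin d) (Fin d) ℝ) : frobNorm M = ‖M‖ := by
  rw [Matrix.frobenius_norm_def, frobNorm, Real.sqrt_eq_rpow]
  congr 1
  refine Finset.sum_congr rfl fun i _ => Finset.sum_congr rfl fun j _ => ?_
  rw [Real.rpow_two, Real.norm_eq_abs, sq_abs]

lemma frobNorm_nonneg {d : ℕ} (M : Matrix (Fin d) (Fin d) ℝ) : 0 ≤ frobNorm M :=
  Real.sqrt_nonneg _

lemma trace_transpose_mul_self {d : ℕ} (M : Matrix (Fin d) (Fin d) ℝ) :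
    Matrix.trace (Mᵀ * M) = ∑ i, ∑ j, (M i j) ^ 2 := by
  simp only [Matrix.trace, Matrix.diag, Matrix.mul_apply, Matrix.transpose_apply, ← sq]
  exact Finset.sum_comm

lemma trace_transpose_mul_self_nonneg {d : ℕ} (M : Matrix (Fin d) (Fin d) ℝ) :
    0 ≤ Matrix.trace (Mᵀ * M) := by
  rw [trace_transpose_mul_self]
  exact Finset.sum_nonneg fun i _ => Finset.sum_nonneg fun j _ => sq_nonneg _

lemma frobNorm_sq {d : ℕ} (M : Matrix (Fin d) (Fin d) ℝ) :
    frobNorm M ^ 2 = Matrix.trace (Mᵀ * M) := by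
  rw [trace_transpose_mul_self, frobNorm, Real.sq_sqrt]
  exact Finset.sum_nonneg fun i _ => Finset.sum_nonneg fun j _ => sq_nonneg _

lemma psd_trace_nonneg {d : ℕ} {M : Matrix (Fin d) (Fin d) ℝ} (hM : M.PosSemidef) :
    0 ≤ M.trace := by
  refine Finset.sum_nonneg fun i _ => ?_
  have := hM.dotProduct_mulVec_nonneg (Pi.single i 1)
  simpa [Matrix.mulVec_single, dotProduct, Pi.single_apply] using this


/-- for PSD matrices `A`, `B` with `ker A ⊆ ker B` (equivalently
`BB† ⪯ AA†`), one has `‖A B A − BB†‖_F ≤ 2‖A B A − AA†‖_F`. The pseudoinverses are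
specified via the Penrose equations. -/
theorem statement10 (d : ℕ) (A B Ad Bd : Matrix (Fin d) (Fin d) ℝ)
    (hA : A.PosSemidef) (hB : B.PosSemidef)
    (hAd : IsMoorePenrose A Ad) (hBd : IsMoorePenrose B Bd)
    (hker : (A * Ad - B * Bd).PosSemidef) :
    frobNorm (A * B * A - B * Bd) ≤ 2 * frobNorm (A * B * A - A * Ad) := by
  obtain ⟨hPA, -, hPt, -⟩ := hAd
  obtain ⟨hQB, -, hQt, -⟩ := hBd
  have hAt : Aᵀ = A := by
    rw [← Matrix.conjTranspose_eq_transpose_of_trivial]; exact hA.1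
  have hBt : Bᵀ = B := by
    rw [← Matrix.conjTranspose_eq_transpose_of_trivial]; exact hB.1
  -- basic projection identities
  have hAP : A * (A * Ad) = A := by
    have h1 : (A * (A * Ad))ᵀ = A := by
      rw [Matrix.transpose_mul, hPt, hAt]; exact hPA
    calc A * (A * Ad) = ((A * (A * Ad))ᵀ)ᵀ := (Matrix.transpose_transpose _).symm
      _ = Aᵀ := by rw [h1]
      _ = A := hAt
  have hBQ : B * (B * Bd) = B := by
    have h1 : (B * (B * Bd))ᵀ = B := by
      rw [Matrix.transpose_mul, hQt, hBt]; exact hQB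
    calc B * (B * Bd) = ((B * (B * Bd))ᵀ)ᵀ := (Matrix.transpose_transpose _).symm
      _ = Bᵀ := by rw [h1]
      _ = B := hBt
  have hPP : (A * Ad) * (A * Ad) = A * Ad := by rw [← Matrix.mul_assoc, hPA]
  have hQQ : (B * Bd) * (B * Bd) = B * Bd := by rw [← Matrix.mul_assoc, hQB]
  -- square root of B
  open MatrixOrder in
  set S := CFC.sqrt B with hSdef
  open MatrixOrder in
  have hSps : S.PosSemidef := (CFC.sqrt_nonneg B).posSemidef
  open MatrixOrder in
  have hSS : S * S = B := CFC.sqrt_mul_sqrt_self B hB.nonneg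
  have hSt : Sᵀ = S := by
    rw [← Matrix.conjTranspose_eq_transpose_of_trivial]; exact hSps.1
  -- Q * S = S and S * Q = S
  have hQS : (B * Bd) * S = S := by
    have h0 : (S - B * Bd * S) * (S - B * Bd * S)ᵀ = 0 := by
      have ht : (S - B * Bd * S)ᵀ = S - S * (B * Bd) := by
        rw [Matrix.transpose_sub, hSt, Matrix.transpose_mul, hSt, hQt]
      rw [ht]
      have expand : (S - B * Bd * S) * (S - S * (B * Bd)) =
          S * S - (S * S) * (B * Bd) - (B * Bd) * (S * S)
            + (B * Bd) * ((S * S) * (B * Bd)) := by noncomm_ring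
      rw [expand, hSS, hBQ, hQB]
      abel
    have h0' : (S - B * Bd * S) * (S - B * Bd * S)ᴴ = 0 := by
      rw [Matrix.conjTranspose_eq_transpose_of_trivial]; exact h0
    have hX : S - B * Bd * S = 0 := Matrix.self_mul_conjTranspose_eq_zero.mp h0'
    have := sub_eq_zero.mp hX
    exact this.symm
  have hSQ : S * (B * Bd) = S := by
    have : (S * (B * Bd))ᵀ = S := by rw [Matrix.transpose_mul, hQt, hSt, hQS]
    calc S * (B * Bd) = ((S * (B * Bd))ᵀ)ᵀ := (Matrix.transpose_transpose _).symm
      _ = Sᵀ := by rw [this]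
      _ = S := hSt
  -- symmetry of C and E
  have hCt : (A * B * A)ᵀ = A * B * A := by
    simp [Matrix.transpose_mul, hAt, hBt, Matrix.mul_assoc]
  have hEt : (S * (A * A) * S)ᵀ = S * (A * A) * S := by
    simp [Matrix.transpose_mul, hAt, hSt, Matrix.mul_assoc]
  -- trace identities
  have t1 : Matrix.trace ((S * (A * A) * S) * (B * Bd)) = Matrix.trace (A * B * A) := by
    rw [Matrix.mul_assoc (S * (A * A)) S (B * Bd), hSQ,
      Matrix.trace_mul_comm (S * (A * A)) S, ← Matrix.mul_assoc S S (A * A), hSS,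
      Matrix.trace_mul_comm (A * B) A, ← Matrix.mul_assoc A A B,
      Matrix.trace_mul_comm (A * A) B]
  have t2 : Matrix.trace ((S * (A * A) * S) * (S * (A * A) * S))
      = Matrix.trace ((A * B * A) * (A * B * A)) := by
    have hE2 : (S * (A * A) * S) * (S * (A * A) * S) = (S * (A * A) * B * (A * A)) * S := by
      rw [← hSS]; noncomm_ring
    have hE3 : S * (S * (A * A) * B * (A * A)) = B * (A * A) * B * (A * A) := by
      rw [← hSS]; noncomm_ring
    have hC2 : (A * B * A) * (A * B * A) = A * (B * (A * A) * B * A) := by noncomm_ring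
    have hC3 : (B * (A * A) * B * A) * A = B * (A * A) * B * (A * A) := by noncomm_ring
    rw [hE2, Matrix.trace_mul_comm (S * (A * A) * B * (A * A)) S, hE3,
      hC2, Matrix.trace_mul_comm A (B * (A * A) * B * A), hC3]
  have hCP : (A * B * A) * (A * Ad) = A * B * A := by
    calc (A * B * A) * (A * Ad) = (A * B) * (A * (A * Ad)) := by noncomm_ring
      _ = (A * B) * A := by rw [hAP]
  have hPC : (A * Ad) * (A * B * A) = A * B * A := by
    calc (A * Ad) * (A * B * A) = ((A * Ad) * A) * (B * A) := by noncomm_ring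
      _ = A * (B * A) := by rw [hPA]
      _ = A * B * A := by noncomm_ring
  -- key inequality: 0 ≤ tr(C²) - 2 tr C + tr Q
  have hkey : 0 ≤ Matrix.trace ((A * B * A) * (A * B * A))
      - 2 * Matrix.trace (A * B * A) + Matrix.trace (B * Bd) := by
    have h0 := trace_transpose_mul_self_nonneg (S * (A * A) * S - B * Bd)
    rw [Matrix.transpose_sub, hEt, hQt, Matrix.sub_mul, Matrix.mul_sub, Matrix.mul_sub,
      hQQ, Matrix.trace_sub, Matrix.trace_sub, Matrix.trace_sub, t2, t1,
      Matrix.trace_mul_comm (B * Bd) (S * (A * A) * S), t1] at h0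
    linarith
  -- tr Q ≤ tr (P Q)
  have hPQ : Matrix.trace (B * Bd) ≤ Matrix.trace ((A * Ad) * (B * Bd)) := by
    have hpsd := hker.mul_mul_conjTranspose_same (B * Bd)
    rw [Matrix.conjTranspose_eq_transpose_of_trivial, hQt] at hpsd
    have h1 := psd_trace_nonneg hpsd
    rw [Matrix.mul_sub, Matrix.sub_mul, Matrix.trace_sub, hQQ,
      Matrix.trace_mul_comm ((B * Bd) * (A * Ad)) (B * Bd),
      ← Matrix.mul_assoc (B * Bd) (B * Bd) (A * Ad), hQQ,
      Matrix.trace_mul_comm (B * Bd) (A * Ad)] at h1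
    linarith
  -- squared norms
  have hx2 : frobNorm (A * B * A - A * Ad) ^ 2
      = Matrix.trace ((A * B * A) * (A * B * A)) - 2 * Matrix.trace (A * B * A)
        + Matrix.trace (A * Ad) := by
    rw [frobNorm_sq, Matrix.transpose_sub, hCt, hPt, Matrix.sub_mul, Matrix.mul_sub,
      Matrix.mul_sub, hPP, hCP, hPC, Matrix.trace_sub, Matrix.trace_sub, Matrix.trace_sub]
    ring
  have hr2 : frobNorm (A * Ad - B * Bd) ^ 2
      = Matrix.trace (A * Ad) - 2 * Matrix.trace ((A * Ad) * (B * Bd))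
        + Matrix.trace (B * Bd) := by
    rw [frobNorm_sq, Matrix.transpose_sub, hPt, hQt, Matrix.sub_mul, Matrix.mul_sub,
      Matrix.mul_sub, hPP, hQQ, Matrix.trace_sub, Matrix.trace_sub, Matrix.trace_sub,
      Matrix.trace_mul_comm (B * Bd) (A * Ad)]
    ring
  -- compare
  have hsq : frobNorm (A * Ad - B * Bd) ^ 2 ≤ frobNorm (A * B * A - A * Ad) ^ 2 := by
    rw [hx2, hr2]; linarith
  have hrx : frobNorm (A * Ad - B * Bd) ≤ frobNorm (A * B * A - A * Ad) := by
    have h := Real.sqrt_le_sqrt hsq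
    rwa [Real.sqrt_sq (frobNorm_nonneg _), Real.sqrt_sq (frobNorm_nonneg _)] at h
  calc frobNorm (A * B * A - B * Bd)
      = ‖(A * B * A - A * Ad) + (A * Ad - B * Bd)‖ := by
        rw [frobNorm_eq]; congr 1; abel
    _ ≤ ‖A * B * A - A * Ad‖ + ‖A * Ad - B * Bd‖ := norm_add_le _ _
    _ = frobNorm (A * B * A - A * Ad) + frobNorm (A * Ad - B * Bd) := by
        rw [frobNorm_eq, frobNorm_eq]
    _ ≤ 2 * frobNorm (A * B * A - A * Ad) := by linarith


end ListDecCov
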